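/- Define J : [0,1] × [0,1] → ℝ by J(a, ã) = 2a² − 4aã + ã² + ã. Then there is no a ∈ [0,1] such that J(a, a) = sup_{ã ∈ [0,1]} J(a, ã). In particular, the one-step mean-field game of Example 1 admits no standard (pure) Nash equilibrium. -/
import Mathlib

open Set

/-- the one-step mean-field game of Example 1, with value
`J(a, b) = 2a² − 4ab + b² + b` (here `b` is the representative player's own action),
admits no standard (pure) Nash equilibrium: no `a ∈ [0,1]` satisfies
`J(a,a) = sup_{b ∈ [0,1]} J(a,b)`. -/
theorem stmt4
    (J : ℝ → ℝ → ℝ)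
    (hJ : ∀ a b, J a b = 2 * a ^ 2 - 4 * a * b + b ^ 2 + b) :
    ¬ ∃ a ∈ Icc (0:ℝ) 1, J a a = ⨆ b : Icc (0:ℝ) 1, J a b := by
  rintro ⟨a, ⟨ha0, ha1⟩, heq⟩
  have hbdd : BddAbove (Set.range fun b : Icc (0:ℝ) 1 => J a b) := by
    refine ⟨2 * a ^ 2 + 2, ?_⟩
    rintro x ⟨⟨b, hb0, hb1⟩, rfl⟩
    simp only [hJ]
    nlinarith
  have h0 : J a 0 ≤ J a a := by
    rw [heq]
    exact le_ciSup hbdd ⟨0, by norm_num, by norm_num⟩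
  have h1 : J a 1 ≤ J a a := by
    rw [heq]
    exact le_ciSup hbdd ⟨1, by norm_num, by norm_num⟩
  simp only [hJ] at h0 h1
  nlinarith
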